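/- arXiv:1205.5156 — 4 statements merged into one kernel-verified Lean document; each statement's English description precedes it below -/
import Mathlib

section
/- If K is a real closed field, M and N are both integer parts of K, then the map sending each element m of M to the unique n in N with n ≤ m < n+1 is an order isomorphism from (M, <) onto (N, <). -/
open FirstOrder Language

/-- A real closed ordered field: every nonnegative element is a square and every
polynomial of odd degree has a root. -/
def IsRealClosedOrdField (K : Type*) [Field K] [LinearOrder K] [IsStrictOrderedRing K] : Prop :=
  (∀ x : K, 0 ≤ x → ∃ y : K, y ^ 2 = x) ∧
    ∀ p : Polynomial K, Odd p.natDegree → ∃ x : K, p.eval x = 0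

/-- `M` is an integer part of the ordered field `K`: it is discretely ordered and every
element of `K` lies within distance one above an element of `M`. -/
def IsIntegerPart {K : Type*} [Field K] [LinearOrder K] [IsStrictOrderedRing K] (M : Subring K) : Prop :=
  (∀ m ∈ M, ¬(0 < m ∧ m < 1)) ∧ ∀ x : K, ∃ m ∈ M, m ≤ x ∧ x < m + 1

/-- `x` is a finite element of the ordered field `K`. -/
def FiniteElt {K : Type*} [Field K] [LinearOrder K] [IsStrictOrderedRing K] (x : K) : Prop := ∃ n : ℕ, |x| ≤ n

/-- `vle x y` says `v x ≤ v y` for the standard valuation `v` (i.e. `y / x` is finite). -/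
def vle {K : Type*} [Field K] [LinearOrder K] [IsStrictOrderedRing K] (x y : K) : Prop := FiniteElt (y / x)

/-- `vlt x y` says `v x < v y` for the standard valuation. -/
def vlt {K : Type*} [Field K] [LinearOrder K] [IsStrictOrderedRing K] (x y : K) : Prop := vle x y ∧ ¬ vle y x

/-- `veq x y` says `v x = v y` for the standard valuation. -/
def veq {K : Type*} [Field K] [LinearOrder K] [IsStrictOrderedRing K] (x y : K) : Prop := vle x y ∧ vle y x

/-- `x` is algebraic over the subring `M` of `K`. -/
def AlgebraicOver {K : Type*} [Field K] [LinearOrder K] [IsStrictOrderedRing K] (M : Subring K) (x : K) : Prop :=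
  ∃ p : Polynomial K, p ≠ 0 ∧ (∀ i, p.coeff i ∈ M) ∧ p.eval x = 0

/-- If K is a real closed field and M, N are integer parts of K, then the map sending
each m ∈ M to the unique n ∈ N with n ≤ m < n + 1 is an order isomorphism (M,<) ≅ (N,<). -/
theorem stmt0 {K : Type*} [Field K] [LinearOrder K] [IsStrictOrderedRing K] (hK : IsRealClosedOrdField K)
    (M N : Subring K) (hM : IsIntegerPart M) (hN : IsIntegerPart N) :
    ∃ f : M ≃o N, ∀ m : M,
      ((f m : K) ≤ (m : K) ∧ (m : K) < (f m : K) + 1) ∧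
      ∀ n : N, ((n : K) ≤ (m : K) ∧ (m : K) < (n : K) + 1) → n = f m := by
  classical
  obtain ⟨hNd, hNf⟩ := hN
  obtain ⟨hMd, hMf⟩ := hM
  have step : ∀ (S : Subring K), (∀ m ∈ S, ¬(0 < m ∧ m < 1)) →
      ∀ a b : K, a ∈ S → b ∈ S → a < b → a + 1 ≤ b := by
    intro S hS a b ha hb hab
    have hmem : b - a ∈ S := S.sub_mem hb ha
    have h := hS _ hmem
    push_neg at h
    have h1 : 1 ≤ b - a := h (by linarith)
    linarith
  have uniq : ∀ (x n n' : K), n ∈ N → n' ∈ N →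
      n ≤ x → x < n + 1 → n' ≤ x → x < n' + 1 → n = n' := by
    intro x n n' hn hn' h1 h2 h3 h4
    rcases lt_trichotomy n n' with h | h | h
    · have := step N hNd n n' hn hn' h; linarith
    · exact h
    · have := step N hNd n' n hn' hn h; linarith
  choose F hFmem hFle hFlt using fun m : M => hNf (m : K)
  set f : M → N := fun m => ⟨F m, hFmem m⟩ with hf
  have finj : Function.Injective f := by
    intro m1 m2 h
    have hF : F m1 = F m2 := congrArg Subtype.val h
    have h1 := hFle m1; have h2 := hFlt m1
    have h3 := hFle m2; have h4 := hFlt m2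
    rw [hF] at h1 h2
    have hd : ((m1 : K) - m2 ∈ M) := M.sub_mem m1.2 m2.2
    have h5 := hMd _ hd
    have hd' : ((m2 : K) - m1 ∈ M) := M.sub_mem m2.2 m1.2
    have h6 := hMd _ hd'
    push_neg at h5 h6
    rcases lt_trichotomy (m1 : K) (m2 : K) with h | h | h
    · exfalso; have := h6 (by linarith); linarith
    · exact Subtype.ext h
    · exfalso; have := h5 (by linarith); linarith
  have fmono : StrictMono f := by
    intro m1 m2 h
    have hlt : (m1 : K) < m2 := h
    have h1 : (m1 : K) + 1 ≤ m2 := step M hMd _ _ m1.2 m2.2 hlt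
    show (F m1 : K) < F m2
    have := hFle m1; have := hFlt m2; have := hFle m2; have := hFlt m1
    linarith
  have fsurj : Function.Surjective f := by
    intro n
    obtain ⟨m0, hm0, hle, hlt⟩ := hMf (n : K)
    by_cases hcase : (n : K) ≤ m0
    · refine ⟨⟨m0, hm0⟩, ?_⟩
      apply Subtype.ext
      exact uniq m0 (F ⟨m0, hm0⟩) n (hFmem _) n.2 (hFle _) (hFlt ⟨m0, hm0⟩)
        (by push_cast; linarith) (by push_cast; linarith)
    · push_neg at hcase
      refine ⟨⟨m0 + 1, M.add_mem hm0 M.one_mem⟩, ?_⟩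
      apply Subtype.ext
      exact uniq (m0 + 1) (F _) n (hFmem _) n.2 (hFle _) (hFlt ⟨m0 + 1, M.add_mem hm0 M.one_mem⟩)
        (by push_cast; linarith) (by push_cast; linarith)
  refine ⟨{ toEquiv := Equiv.ofBijective f ⟨finj, fsurj⟩,
            map_rel_iff' := fun {a b} => fmono.le_iff_le }, ?_⟩
  intro m
  refine ⟨⟨hFle m, hFlt m⟩, ?_⟩
  rintro n ⟨h1, h2⟩
  apply Subtype.ext
  exact uniq m n (F m) n.2 (hFmem m) h1 h2 (hFle m) (hFlt m)
end

section
/- Let G ⊆ H be divisible ordered abelian groups with G convex in H and H/G nontrivial and finite dimensional over Q. Then there exists h in H such that every element of H is bounded above by m·h for some natural number m. -/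
/-- Let G ⊆ H be divisible ordered abelian groups with G convex in H and H/G nontrivial
and finite dimensional over ℚ. Then there is h ∈ H such that every element of H is
bounded above by m • h for some natural number m. -/
theorem stmt3 {H : Type*} [AddCommGroup H] [LinearOrder H] [IsOrderedAddMonoid H] (G : AddSubgroup H)
    (hHdiv : ∀ x : H, ∀ n : ℕ, 0 < n → ∃ y : H, n • y = x)
    (hGdiv : ∀ x ∈ G, ∀ n : ℕ, 0 < n → ∃ y ∈ G, n • y = x)
    (hconv : ∀ a ∈ G, ∀ b ∈ G, ∀ x : H, a ≤ x → x ≤ b → x ∈ G)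
    (hnontriv : (G : Set H) ≠ Set.univ)
    (hfindim : ∃ (k : ℕ) (s : Fin k → H), ∀ x : H, ∃ n : ℕ, 0 < n ∧
      ∃ c : Fin k → ℤ, (n : ℤ) • x - ∑ i, c i • s i ∈ G) :
    ∃ h : H, ∀ x : H, ∃ m : ℕ, x ≤ m • h := by
  obtain ⟨k, s, hs⟩ := hfindim
  -- obtain a positive element outside G
  obtain ⟨a, ha⟩ : ∃ a : H, a ∉ G := by
    by_contra hc; push_neg at hc
    exact hnontriv (Set.eq_univ_of_forall hc)
  obtain ⟨h₀, h₀pos, h₀nG⟩ : ∃ h₀ : H, 0 < h₀ ∧ h₀ ∉ G := by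
    rcases lt_trichotomy a 0 with h | h | h
    · exact ⟨-a, neg_pos.mpr h, fun hm => ha (by simpa using G.neg_mem hm)⟩
    · exact absurd (h ▸ G.zero_mem) ha
    · exact ⟨a, h, ha⟩
  -- h₀ bounds G above, by convexity
  have hGbound : ∀ g ∈ G, g ≤ h₀ := by
    intro g hg
    by_contra hlt
    push_neg at hlt
    exact h₀nG (hconv 0 G.zero_mem g hg h₀ h₀pos.le hlt.le)
  set T := ∑ i, |s i| with hT
  have hTnn : 0 ≤ T := Finset.sum_nonneg fun i _ => abs_nonneg _
  refine ⟨T + h₀, fun x => ?_⟩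
  rcases le_or_gt x 0 with hx | hx
  · exact ⟨1, by simpa using hx.trans (add_pos_of_nonneg_of_pos hTnn h₀pos).le⟩
  obtain ⟨n, hn, c, hc⟩ := hs x
  set M := (Finset.univ.sup fun i => (c i).natAbs) + 1 with hM
  have hMi : ∀ i, (c i).natAbs ≤ M := fun i =>
    Nat.le_succ_of_le (Finset.le_sup (f := fun i => (c i).natAbs) (Finset.mem_univ i))
  -- bound the sum
  have hsum : ∑ i, c i • s i ≤ M • T := by
    rw [Finset.smul_sum]
    refine Finset.sum_le_sum fun i _ => ?_
    calc c i • s i ≤ |c i • s i| := le_abs_self _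
      _ = |c i| • |s i| := abs_zsmul _ _
      _ = (c i).natAbs • |s i| := by
          rw [Int.abs_eq_natAbs, natCast_zsmul]
      _ ≤ M • |s i| := nsmul_le_nsmul_left (abs_nonneg _) (hMi i)
  have hg : (n : ℤ) • x - ∑ i, c i • s i ≤ h₀ := hGbound _ hc
  have hnx : n • x ≤ M • T + h₀ := by
    have : (n : ℤ) • x ≤ M • T + h₀ := by
      have := add_le_add hsum hg
      simpa [add_sub_cancel, add_comm] using this
    simpa [natCast_zsmul] using this
  have hxn : x ≤ n • x := by
    calc x = 1 • x := (one_nsmul x).symm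
      _ ≤ n • x := nsmul_le_nsmul_left hx.le hn
  refine ⟨M, ?_⟩
  have hMh : M • T + h₀ ≤ M • (T + h₀) := by
    rw [smul_add]
    have h1 : h₀ ≤ M • h₀ := by
      calc h₀ = 1 • h₀ := (one_nsmul h₀).symm
        _ ≤ M • h₀ := nsmul_le_nsmul_left h₀pos.le (by omega)
    exact add_le_add_right h1 _
  exact hxn.trans (hnx.trans hMh)
end

section
/- Let G be a linearly ordered abelian group, k an ordered field, and let μ be the set of elements of k((G)) with strictly positive valuation (the infinitesimals). If k has characteristic 0, then the map E₀: μ → 1+μ defined by E₀(ε) = Σ_{n≥0} εⁿ/n! is a bijection satisfying E₀(x+y) = E₀(x)·E₀(y), with inverse l(1+ε) = Σ_{n≥1} (-1)^{n+1} εⁿ/n. -/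
open HahnSeries PowerSeries

namespace Stmt7Aux


variable {k G : Type*} [Field k] [LinearOrder k] [IsStrictOrderedRing k]
  [AddCommGroup G] [LinearOrder G] [IsOrderedAddMonoid G]

/-- positivity of orderTop, as a coefficient condition -/
def Pos (x : HahnSeries G k) : Prop := ∀ g : G, g ≤ 0 → x.coeff g = 0

def Nneg (x : HahnSeries G k) : Prop := ∀ g : G, g < 0 → x.coeff g = 0

lemma Pos.nneg {x : HahnSeries G k} (h : Pos x) : Nneg x := fun g hg => h g hg.le

lemma pos_iff {x : HahnSeries G k} : Pos x ↔ 0 < x.orderTop := by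
  constructor
  · intro h
    rcases eq_or_ne x 0 with rfl | hx
    · simp [orderTop_zero]
    · rw [zero_lt_orderTop_iff hx]
      by_contra hc
      push_neg at hc
      exact (mt HahnSeries.coeff_order_eq_zero.mp hx) (h _ hc)
  · intro h g hg
    by_contra hc
    have h1 := orderTop_le_of_coeff_ne_zero hc
    have h2 : (g : WithTop G) ≤ (0 : WithTop G) := by exact_mod_cast hg
    exact absurd (lt_of_lt_of_le (lt_of_lt_of_le h h1) h2) (lt_irrefl _)

lemma pos_zero : Pos (0 : HahnSeries G k) := fun _ _ => rfl

lemma nneg_one : Nneg (1 : HahnSeries G k) := by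
  intro g hg
  rw [HahnSeries.coeff_one, if_neg hg.ne]

lemma Pos.add {x y : HahnSeries G k} (hx : Pos x) (hy : Pos y) : Pos (x + y) := by
  intro g hg; rw [HahnSeries.coeff_add, hx g hg, hy g hg, add_zero]

lemma Nneg.mul {x y : HahnSeries G k} (hx : Nneg x) (hy : Nneg y) : Nneg (x * y) := by
  intro g hg
  by_contra hc
  obtain ⟨a, ha, b, hb, rfl⟩ := Set.mem_add.mp (HahnSeries.support_mul_subset (x := x) (y := y) hc)
  have ha' : 0 ≤ a := le_of_not_gt fun h => ha (hx a h)
  have hb' : 0 ≤ b := le_of_not_gt fun h => hb (hy b h)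
  exact absurd hg (not_lt.mpr (add_nonneg ha' hb'))

lemma Pos.mul_nneg {x y : HahnSeries G k} (hx : Pos x) (hy : Nneg y) : Pos (x * y) := by
  intro g hg
  by_contra hc
  obtain ⟨a, ha, b, hb, rfl⟩ := Set.mem_add.mp (HahnSeries.support_mul_subset (x := x) (y := y) hc)
  have ha' : 0 < a := lt_of_not_ge fun h => ha (hx a h)
  have hb' : 0 ≤ b := le_of_not_gt fun h => hb (hy b h)
  exact absurd hg (not_le.mpr (add_pos_of_pos_of_nonneg ha' hb'))

lemma Nneg.pow {x : HahnSeries G k} (hx : Nneg x) (n : ℕ) : Nneg (x ^ n) := by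
  induction n with
  | zero => simpa using nneg_one
  | succ n ih => rw [pow_succ]; exact ih.mul hx

lemma Pos.pow_succ {x : HahnSeries G k} (hx : Pos x) (n : ℕ) : Pos (x ^ (n + 1)) := by
  have := hx.mul_nneg (hx.nneg.pow n)
  rwa [← pow_succ'] at this



variable {ε : HahnSeries G k}

lemma co_pow_finite (hε : Pos ε) (g : G) : {n : ℕ | (ε ^ n).coeff g ≠ 0}.Finite := by
  have := (SummableFamily.powers ε).finite_co_support g
  simp [pos_iff.mp hε] at this; exact this

lemma iUnion_pow_isPWO (hε : Pos ε) : (⋃ n : ℕ, (ε ^ n).support).IsPWO := by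
  have := (SummableFamily.powers ε).isPWO_iUnion_support
  simpa [pos_iff.mp hε] using this

/-- The summable family n ↦ (coeff n f) • ε^n. -/
noncomputable def psFam (f : PowerSeries k) (ε : HahnSeries G k) (hε : Pos ε) :
    SummableFamily G k ℕ where
  toFun n := (PowerSeries.coeff n f) • ε ^ n
  isPWO_iUnion_support' := by
    refine (iUnion_pow_isPWO hε).mono (Set.iUnion_mono fun n => ?_)
    intro g hg
    simp only [HahnSeries.mem_support, HahnSeries.coeff_smul, smul_eq_mul] at hg ⊢
    exact fun h => hg (by rw [h, mul_zero])
  finite_co_support' g := by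
    refine (co_pow_finite hε g).subset fun n hn => ?_
    simp only [Set.mem_setOf_eq, HahnSeries.coeff_smul, smul_eq_mul] at hn ⊢
    exact fun h => hn (by rw [h, mul_zero])

@[simp] lemma psFam_apply (f : PowerSeries k) (hε : Pos ε) (n : ℕ) :
    psFam f ε hε n = (PowerSeries.coeff n f) • ε ^ n := rfl

/-- Evaluation of a power series at an infinitesimal Hahn series. -/
noncomputable def Phi (f : PowerSeries k) (ε : HahnSeries G k) (hε : Pos ε) : HahnSeries G k :=
  (psFam f ε hε).hsum

lemma Phi_coeff (f : PowerSeries k) (hε : Pos ε) (g : G) :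
    (Phi f ε hε).coeff g = ∑ᶠ n : ℕ, (PowerSeries.coeff n f) * (ε ^ n).coeff g := by
  rw [Phi, SummableFamily.coeff_hsum]
  simp [HahnSeries.coeff_smul]

lemma Phi_coeff_support (f : PowerSeries k) (hε : Pos ε) (g : G) :
    (Function.support fun n : ℕ => (PowerSeries.coeff n f) * (ε ^ n).coeff g)
      ⊆ (co_pow_finite hε g).toFinset := by
  intro n hn
  simp only [Function.mem_support] at hn
  simp only [Finset.coe_sort_coe, Set.Finite.coe_toFinset, Set.mem_setOf_eq]
  exact fun h => hn (by rw [h, mul_zero])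

lemma Phi_one (hε : Pos ε) : Phi 1 ε hε = 1 := by
  ext g
  rw [Phi_coeff]
  rw [finsum_eq_single _ 0 (fun n hn => by simp [PowerSeries.coeff_one, hn])]
  simp

lemma Phi_X (hε : Pos ε) : Phi PowerSeries.X ε hε = ε := by
  ext g
  rw [Phi_coeff]
  rw [finsum_eq_single _ 1 (fun n hn => by simp [PowerSeries.coeff_X, hn])]
  simp

lemma psFam_add (f₁ f₂ : PowerSeries k) (hε : Pos ε) :
    psFam (f₁ + f₂) ε hε = psFam f₁ ε hε + psFam f₂ ε hε := by
  refine SummableFamily.ext fun n => ?_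
  simp [SummableFamily.add_apply, add_smul]

lemma Phi_add (f₁ f₂ : PowerSeries k) (hε : Pos ε) :
    Phi (f₁ + f₂) ε hε = Phi f₁ ε hε + Phi f₂ ε hε := by
  rw [Phi, psFam_add, SummableFamily.hsum_add]; rfl

lemma Phi_sub (f₁ f₂ : PowerSeries k) (hε : Pos ε) :
    Phi (f₁ - f₂) ε hε = Phi f₁ ε hε - Phi f₂ ε hε := by
  have := Phi_add (f₁ - f₂) f₂ hε
  rw [sub_add_cancel] at this
  rw [this]; ring

lemma pos_Phi {f : PowerSeries k} (hf : PowerSeries.constantCoeff f = 0) (hε : Pos ε) :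
    Pos (Phi f ε hε) := by
  intro g hg
  rw [Phi_coeff]
  refine finsum_eq_zero_of_forall_eq_zero fun n => ?_
  cases n with
  | zero => simp [PowerSeries.coeff_zero_eq_constantCoeff, hf]
  | succ m => rw [hε.pow_succ m g hg, mul_zero]




lemma coeff_finsetSum {α : Type*} (s : Finset α) (f : α → HahnSeries G k) (g : G) :
    (∑ a ∈ s, f a).coeff g = ∑ a ∈ s, (f a).coeff g :=
  map_sum (HahnSeries.coeff.addMonoidHom g) f s

/-- Regrouping a summable family indexed by ℕ × ℕ along antidiagonals. -/
noncomputable def groupFam (s : SummableFamily G k (ℕ × ℕ)) : SummableFamily G k ℕ where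
  toFun n := ∑ p ∈ Finset.HasAntidiagonal.antidiagonal n, s p
  isPWO_iUnion_support' := by
    refine s.isPWO_iUnion_support.mono ?_
    refine Set.iUnion_subset fun n g hg => ?_
    rw [HahnSeries.mem_support, coeff_finsetSum] at hg
    obtain ⟨p, _, hp⟩ := Finset.exists_ne_zero_of_sum_ne_zero hg
    exact Set.mem_iUnion.mpr ⟨p, hp⟩
  finite_co_support' g := by
    refine ((s.finite_co_support g).image fun p => p.1 + p.2).subset fun n hn => ?_
    simp only [Set.mem_setOf_eq, coeff_finsetSum] at hn
    obtain ⟨p, hp, hp2⟩ := Finset.exists_ne_zero_of_sum_ne_zero hn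
    exact ⟨p, hp2, Finset.HasAntidiagonal.mem_antidiagonal.mp hp⟩

@[simp] lemma groupFam_apply (s : SummableFamily G k (ℕ × ℕ)) (n : ℕ) :
    groupFam s n = ∑ p ∈ Finset.HasAntidiagonal.antidiagonal n, s p := rfl

lemma hsum_groupFam (s : SummableFamily G k (ℕ × ℕ)) :
    (groupFam s).hsum = s.hsum := by
  ext g
  rw [SummableFamily.coeff_hsum, SummableFamily.coeff_hsum]
  classical
  set T : Finset (ℕ × ℕ) := (s.finite_co_support g).toFinset with hT
  have hTmem : ∀ p : ℕ × ℕ, p ∈ T ↔ (s p).coeff g ≠ 0 := by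
    intro p; rw [hT]; exact Set.Finite.mem_toFinset _
  set N : Finset ℕ := T.image fun p => p.1 + p.2 with hN
  have hR : ∑ᶠ p : ℕ × ℕ, (s p).coeff g = ∑ p ∈ T, (s p).coeff g := by
    refine finsum_eq_sum_of_support_subset _ fun p hp => ?_
    simpa [hTmem] using hp
  have hL : ∑ᶠ n : ℕ, ((groupFam s) n).coeff g = ∑ n ∈ N, ((groupFam s) n).coeff g := by
    refine finsum_eq_sum_of_support_subset _ fun n hn => ?_
    simp only [Function.mem_support, groupFam_apply, coeff_finsetSum] at hn
    obtain ⟨p, hp, hp2⟩ := Finset.exists_ne_zero_of_sum_ne_zero hn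
    exact Finset.coe_subset.mpr (le_refl N) (Finset.mem_image.mpr
      ⟨p, (hTmem p).mpr hp2, Finset.HasAntidiagonal.mem_antidiagonal.mp hp⟩)
  rw [hL, hR]
  simp only [groupFam_apply, coeff_finsetSum]
  have hdisj : (↑N : Set ℕ).PairwiseDisjoint fun n => Finset.HasAntidiagonal.antidiagonal n := by
    intro a _ b _ hab
    simp only [Function.onFun, Finset.disjoint_left]
    intro p hpa hpb
    exact hab ((Finset.HasAntidiagonal.mem_antidiagonal.mp hpa).symm.trans (Finset.HasAntidiagonal.mem_antidiagonal.mp hpb))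
  rw [← Finset.sum_biUnion hdisj]
  refine (Finset.sum_subset ?_ ?_).symm
  · intro p hp
    rw [Finset.mem_biUnion]
    exact ⟨p.1 + p.2, Finset.mem_image.mpr ⟨p, hp, rfl⟩, Finset.HasAntidiagonal.mem_antidiagonal.mpr rfl⟩
  · intro p _ hp
    by_contra hc
    exact hp ((hTmem p).mpr hc)


lemma Phi_mul (f₁ f₂ : PowerSeries k) (hε : Pos ε) :
    Phi (f₁ * f₂) ε hε = Phi f₁ ε hε * Phi f₂ ε hε := by
  have h1 : groupFam (SummableFamily.mul (psFam f₁ ε hε) (psFam f₂ ε hε))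
      = psFam (f₁ * f₂) ε hε := by
    refine SummableFamily.ext fun n => ?_
    simp only [groupFam_apply, psFam_apply, SummableFamily.mul_toFun,
      HahnSeries.of_symm_smul_of_eq_mul]
    rw [PowerSeries.coeff_mul, Finset.sum_smul]
    refine Finset.sum_congr rfl fun p hp => ?_
    rw [← HahnSeries.single_zero_mul_eq_smul, ← HahnSeries.single_zero_mul_eq_smul,
      ← HahnSeries.single_zero_mul_eq_smul]
    have hss : (HahnSeries.single (0 : G) ((PowerSeries.coeff p.1) f₁ * (PowerSeries.coeff p.2) f₂))
        = HahnSeries.single (0 : G) ((PowerSeries.coeff p.1) f₁)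
          * HahnSeries.single (0 : G) ((PowerSeries.coeff p.2) f₂) := by
      rw [HahnSeries.single_mul_single, zero_add]
    rw [hss, ← Finset.HasAntidiagonal.mem_antidiagonal.mp hp, _root_.pow_add]
    ring
  calc Phi (f₁ * f₂) ε hε
      = (groupFam (SummableFamily.mul (psFam f₁ ε hε) (psFam f₂ ε hε))).hsum := by
        rw [h1]; rfl
    _ = (SummableFamily.mul (psFam f₁ ε hε) (psFam f₂ ε hε)).hsum := hsum_groupFam _
    _ = Phi f₁ ε hε * Phi f₂ ε hε := by
        rw [SummableFamily.hsum_mul]; rfl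

lemma Phi_pow (f : PowerSeries k) (hε : Pos ε) (m : ℕ) :
    Phi (f ^ m) ε hε = (Phi f ε hε) ^ m := by
  induction m with
  | zero => simpa using Phi_one hε
  | succ m ih => rw [pow_succ, pow_succ, Phi_mul, ih]

lemma coeff_pow_lt {g : PowerSeries k} (hg : PowerSeries.constantCoeff g = 0) :
    ∀ m n : ℕ, n < m → PowerSeries.coeff n (g ^ m) = 0 := by
  intro m
  induction m with
  | zero => intro n hn; exact absurd hn (Nat.not_lt_zero n)
  | succ m ih =>
    intro n hn
    rw [pow_succ, PowerSeries.coeff_mul]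
    refine Finset.sum_eq_zero fun p hp => ?_
    have hpn := Finset.HasAntidiagonal.mem_antidiagonal.mp hp
    rcases Nat.eq_zero_or_pos p.2 with h2 | h2
    · rw [h2, PowerSeries.coeff_zero_eq_constantCoeff, hg, mul_zero]
    · have : p.1 < m := by omega
      rw [ih p.1 this, zero_mul]

/-- Composition of power series (valid when `g` has zero constant term). -/
noncomputable def comp (f g : PowerSeries k) : PowerSeries k :=
  PowerSeries.mk fun n => ∑ m ∈ Finset.range (n + 1),
    PowerSeries.coeff m f * PowerSeries.coeff n (g ^ m)

lemma coeff_comp (f g : PowerSeries k) (n : ℕ) :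
    PowerSeries.coeff n (comp f g) = ∑ m ∈ Finset.range (n + 1),
      PowerSeries.coeff m f * PowerSeries.coeff n (g ^ m) :=
  PowerSeries.coeff_mk _ _

lemma Phi_comp (f g : PowerSeries k) (hg : PowerSeries.constantCoeff g = 0) (hε : Pos ε) :
    Phi (comp f g) ε hε = Phi f (Phi g ε hε) (pos_Phi hg hε) := by
  ext γ
  classical
  set N : Finset ℕ := (co_pow_finite hε γ).toFinset with hNdef
  have hNmem : ∀ n : ℕ, n ∈ N ↔ (ε ^ n).coeff γ ≠ 0 := fun n => by simp [hNdef]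
  set B : ℕ := N.sup id + 1 with hBdef
  have hNB : ∀ n ∈ N, n < B := fun n hn =>
    Nat.lt_succ_of_le (Finset.le_sup (f := id) hn)
  rw [Phi_coeff, Phi_coeff]
  have hL : ∑ᶠ n : ℕ, PowerSeries.coeff n (comp f g) * (ε ^ n).coeff γ
      = ∑ n ∈ N, ∑ m ∈ Finset.range B,
          PowerSeries.coeff m f * PowerSeries.coeff n (g ^ m) * (ε ^ n).coeff γ := by
    rw [finsum_eq_sum_of_support_subset _ (s := N) (fun n hn => by
      simp only [Function.mem_support] at hn
      exact (hNmem n).mpr fun h => hn (by rw [h, mul_zero]))]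
    refine Finset.sum_congr rfl fun n hn => ?_
    rw [coeff_comp, Finset.sum_mul]
    refine (Finset.sum_subset ?_ ?_)
    · exact Finset.range_subset_range.mpr (hNB n hn)
    · intro m _ hm
      have : n < m := by
        simp only [Finset.mem_range, not_lt] at hm
        omega
      rw [coeff_pow_lt hg m n this, mul_zero, zero_mul]
  have hpow : ∀ m : ℕ, ((Phi g ε hε) ^ m).coeff γ
      = ∑ n ∈ N, PowerSeries.coeff n (g ^ m) * (ε ^ n).coeff γ := by
    intro m
    rw [← Phi_pow, Phi_coeff]
    refine finsum_eq_sum_of_support_subset _ fun n hn => ?_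
    simp only [Function.mem_support] at hn
    exact (hNmem n).mpr fun h => hn (by rw [h, mul_zero])
  have hR : ∑ᶠ m : ℕ, PowerSeries.coeff m f * ((Phi g ε hε) ^ m).coeff γ
      = ∑ m ∈ Finset.range B, ∑ n ∈ N,
          PowerSeries.coeff m f * PowerSeries.coeff n (g ^ m) * (ε ^ n).coeff γ := by
    rw [finsum_eq_sum_of_support_subset _ (s := Finset.range B) (fun m hm => by
      simp only [Function.mem_support] at hm
      simp only [Finset.coe_range, Set.mem_Iio]
      by_contra hc
      push_neg at hc
      refine hm ?_
      rw [hpow m]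
      rw [Finset.sum_eq_zero fun n hn => ?_, mul_zero]
      have : n < m := lt_of_lt_of_le (hNB n hn) hc
      rw [coeff_pow_lt hg m n this, zero_mul])]
    refine Finset.sum_congr rfl fun m _ => ?_
    rw [hpow m, Finset.mul_sum]
    exact Finset.sum_congr rfl fun n _ => by ring
  rw [hL, hR, Finset.sum_comm]


section Series
variable (k)

noncomputable def expS : PowerSeries k := PowerSeries.mk fun n => (n.factorial : k)⁻¹

noncomputable def logS : PowerSeries k := PowerSeries.mk fun n => (-1 : k) ^ (n + 1) / (n : k)

end Series

@[simp] lemma coeff_expS (n : ℕ) : PowerSeries.coeff n (expS k) = (n.factorial : k)⁻¹ :=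
  PowerSeries.coeff_mk _ _

@[simp] lemma coeff_logS (n : ℕ) :
    PowerSeries.coeff n (logS k) = (-1 : k) ^ (n + 1) / (n : k) :=
  PowerSeries.coeff_mk _ _

lemma constantCoeff_gexp : PowerSeries.constantCoeff (expS k - 1) = 0 := by
  rw [map_sub, map_one, ← PowerSeries.coeff_zero_eq_constantCoeff]
  simp

lemma constantCoeff_logS : PowerSeries.constantCoeff (logS k) = 0 := by
  rw [← PowerSeries.coeff_zero_eq_constantCoeff]
  simp

lemma coeff_one_logS : PowerSeries.coeff 1 (logS k) = 1 := by
  simp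

lemma derivative_expS : d⁄dX k (expS k) = expS k := by
  ext n
  rw [PowerSeries.coeff_derivative, coeff_expS, coeff_expS, Nat.factorial_succ, Nat.cast_mul]
  have h1 : ((n : k) + 1) ≠ 0 := by positivity
  have h2 : ((n.factorial : k)) ≠ 0 := Nat.cast_ne_zero.mpr n.factorial_ne_zero
  push_cast
  field_simp

lemma comp_logS_gexp : comp (logS k) (expS k - 1) = (PowerSeries.X : PowerSeries k) := by
  set g : PowerSeries k := expS k - 1 with hgdef
  have hg : PowerSeries.constantCoeff g = 0 := constantCoeff_gexp
  have hdg : d⁄dX k g = 1 + g := by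
    rw [hgdef, map_sub, derivative_expS, Derivation.map_one_eq_zero]
    ring
  ext n
  rcases Nat.eq_zero_or_pos n with rfl | hn
  · rw [coeff_comp]
    simp
  obtain ⟨n', rfl⟩ : ∃ n', n = n' + 1 := ⟨n - 1, by omega⟩
  have hne : ((n' : k) + 1) ≠ 0 := by positivity
  have key : ∀ m : ℕ, PowerSeries.coeff n' (d⁄dX k (g ^ m))
      = ((n' : k) + 1) * PowerSeries.coeff (n' + 1) (g ^ m) := by
    intro m
    rw [PowerSeries.coeff_derivative]
    push_cast
    ring
  have hder : ∀ m : ℕ, PowerSeries.coeff n' (d⁄dX k (g ^ m))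
      = (m : k) * PowerSeries.coeff n' (g ^ (m - 1) * (1 + g)) := by
    intro m
    rw [Derivation.leibniz_pow, hdg, smul_eq_mul, nsmul_eq_mul]
    rw [show ((m : PowerSeries k)) = PowerSeries.C ((m : k)) by push_cast; rfl]
    rw [PowerSeries.coeff_C_mul]
  have hmain : ((n' : k) + 1) * PowerSeries.coeff (n' + 1) (comp (logS k) g)
      = if n' = 0 then 1 else 0 := by
    rw [coeff_comp, Finset.mul_sum]
    have hterm : ∀ m ∈ Finset.range (n' + 2),
        ((n' : k) + 1) * (PowerSeries.coeff m (logS k) * PowerSeries.coeff (n' + 1) (g ^ m))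
        = PowerSeries.coeff m (logS k) * ((m : k) * PowerSeries.coeff n' (g ^ (m - 1) * (1 + g))) := by
      intro m _
      rw [← hder, key]
      ring
    rw [Finset.sum_congr rfl hterm, Finset.sum_range_succ']
    have h0 : PowerSeries.coeff 0 (logS k) * ((0 : ℕ) * PowerSeries.coeff n' (g ^ (0 - 1) * (1 + g))) = 0 := by
      push_cast
      ring
    rw [h0, add_zero]
    have hterm2 : ∀ j ∈ Finset.range (n' + 1),
        PowerSeries.coeff (j + 1) (logS k) * (((j + 1 : ℕ) : k)
          * PowerSeries.coeff n' (g ^ (j + 1 - 1) * (1 + g)))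
        = PowerSeries.coeff n' ((-g) ^ j * (1 + g)) := by
      intro j _
      have hj : ((j + 1 : ℕ) : k) ≠ 0 := by positivity
      have hc : (-1 : k) ^ (j + 1 + 1) / ((j + 1 : ℕ) : k) * ((j + 1 : ℕ) : k) = (-1 : k) ^ j := by
        field_simp
        rw [pow_succ, pow_succ]
        ring
      have hgpow : ((-g) ^ j : PowerSeries k) = PowerSeries.C ((-1 : k) ^ j) * g ^ j := by
        rw [neg_pow]
        congr 1
        rw [map_pow, map_neg, map_one]
      simp only [Nat.add_sub_cancel]
      calc PowerSeries.coeff (j + 1) (logS k) * (((j + 1 : ℕ) : k)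
            * PowerSeries.coeff n' (g ^ j * (1 + g)))
          = (PowerSeries.coeff (j + 1) (logS k) * ((j + 1 : ℕ) : k))
            * PowerSeries.coeff n' (g ^ j * (1 + g)) := by ring
        _ = (-1 : k) ^ j * PowerSeries.coeff n' (g ^ j * (1 + g)) := by
            rw [coeff_logS]
            push_cast at hc ⊢
            rw [hc]
        _ = PowerSeries.coeff n' ((-g) ^ j * (1 + g)) := by
            rw [hgpow, mul_assoc, PowerSeries.coeff_C_mul]
    rw [Finset.sum_congr rfl hterm2]
    have hsum : ∑ j ∈ Finset.range (n' + 1), PowerSeries.coeff n' ((-g) ^ j * (1 + g))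
        = PowerSeries.coeff n' ((∑ j ∈ Finset.range (n' + 1), (-g) ^ j) * (1 + g)) := by
      rw [Finset.sum_mul, map_sum]
    rw [hsum]
    have hgeom : (∑ j ∈ Finset.range (n' + 1), (-g) ^ j) * (1 + g)
        = 1 - (-g) ^ (n' + 1) := by
      have := geom_sum_mul (-g) (n' + 1)
      have h2 : (1 + g : PowerSeries k) = -(-g - 1) := by ring
      rw [h2, mul_neg, this]
      ring
    rw [hgeom, map_sub]
    have hz : PowerSeries.coeff n' ((-g) ^ (n' + 1)) = 0 := by
      have hgpow : ((-g) ^ (n' + 1) : PowerSeries k)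
          = PowerSeries.C ((-1 : k) ^ (n' + 1)) * g ^ (n' + 1) := by
        rw [neg_pow]
        congr 1
        rw [map_pow, map_neg, map_one]
      rw [hgpow, PowerSeries.coeff_C_mul, coeff_pow_lt hg (n' + 1) n' (by omega), mul_zero]
    rw [hz, sub_zero, PowerSeries.coeff_one]
  have hgoal : ((n' : k) + 1) * PowerSeries.coeff (n' + 1) (comp (logS k) g)
      = ((n' : k) + 1) * (if n' = 0 then 1 else 0) := by
    rw [hmain]
    split <;> simp_all
  have := mul_left_cancel₀ hne hgoal
  rw [this, PowerSeries.coeff_X]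
  by_cases h : n' = 0 <;> simp [h]

/-- The shifted family m ↦ coeff (m+1) f • ε^(m+1). -/
noncomputable def psFamS (f : PowerSeries k) (ε : HahnSeries G k) (hε : Pos ε) :
    SummableFamily G k ℕ where
  toFun m := (PowerSeries.coeff (m + 1) f) • ε ^ (m + 1)
  isPWO_iUnion_support' := by
    refine (iUnion_pow_isPWO hε).mono ?_
    refine Set.iUnion_subset fun m g hg => ?_
    refine Set.mem_iUnion.mpr ⟨m + 1, ?_⟩
    simp only [HahnSeries.mem_support, HahnSeries.coeff_smul, smul_eq_mul] at hg ⊢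
    exact fun h => hg (by rw [h, mul_zero])
  finite_co_support' g := by
    refine ((co_pow_finite hε g).preimage (f := fun m : ℕ => m + 1)
      (Set.injOn_of_injective (add_left_injective 1))).subset fun m hm => ?_
    simp only [Set.mem_setOf_eq, HahnSeries.coeff_smul, smul_eq_mul] at hm
    simp only [Set.mem_preimage, Set.mem_setOf_eq]
    exact fun h => hm (by rw [h, mul_zero])

@[simp] lemma psFamS_apply (f : PowerSeries k) (hε : Pos ε) (m : ℕ) :
    psFamS f ε hε m = (PowerSeries.coeff (m + 1) f) • ε ^ (m + 1) := rfl

lemma hsum_psFamS (f : PowerSeries k) (hf : PowerSeries.constantCoeff f = 0) (hε : Pos ε) :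
    (psFamS f ε hε).hsum = Phi f ε hε := by
  have hemb : SummableFamily.embDomain (psFamS f ε hε)
      ⟨Nat.succ, Nat.succ_injective⟩ = psFam f ε hε := by
    refine SummableFamily.ext fun n => ?_
    cases n with
    | zero =>
      have h0 : (0 : ℕ) ∉ Set.range (⟨Nat.succ, Nat.succ_injective⟩ : ℕ ↪ ℕ) := by
        rintro ⟨y, hy⟩
        exact Nat.succ_ne_zero y hy
      rw [SummableFamily.embDomain_notin_range _ _ h0]
      simp [PowerSeries.coeff_zero_eq_constantCoeff, hf]
    | succ m =>
      have := SummableFamily.embDomain_image (s := psFamS f ε hε)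
        (f := (⟨Nat.succ, Nat.succ_injective⟩ : ℕ ↪ ℕ)) (a := m)
      simpa using this
  rw [Phi, ← hemb, SummableFamily.hsum_embDomain]

lemma Phi_logS_inj {a b : HahnSeries G k} (ha : Pos a) (hb : Pos b)
    (h : Phi (logS k) a ha = Phi (logS k) b hb) : a = b := by
  by_contra hne
  have hd0 : a - b ≠ 0 := sub_ne_zero.mpr hne
  set γ : G := (a - b).order with hγdef
  set tail : PowerSeries k := logS k - PowerSeries.X with htail
  have hkey : a - b = Phi tail b hb - Phi tail a ha := by
    have hA := Phi_sub (logS k) PowerSeries.X ha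
    have hB := Phi_sub (logS k) PowerSeries.X hb
    rw [Phi_X] at hA hB
    rw [← htail] at hA hB
    rw [hA, hB, h]
    ring
  have hterm : ∀ n : ℕ, PowerSeries.coeff n tail * ((b ^ n).coeff γ - (a ^ n).coeff γ) = 0 := by
    intro n
    match n with
    | 0 =>
      have : PowerSeries.coeff 0 tail = 0 := by
        simp [htail, PowerSeries.coeff_X, constantCoeff_logS]
      rw [this, zero_mul]
      
    | 1 =>
      have : PowerSeries.coeff 1 tail = 0 := by
        simp [htail, PowerSeries.coeff_X]
      rw [this, zero_mul]
    | (n + 2) =>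
      have hgeom := geom_sum₂_mul b a (n + 2)
      set hsum : HahnSeries G k := ∑ i ∈ Finset.range (n + 2), b ^ i * a ^ (n + 2 - 1 - i) with hsdef
      have hpos : Pos hsum := by
        intro g hg
        rw [hsdef, coeff_finsetSum]
        refine Finset.sum_eq_zero fun i _ => ?_
        cases i with
        | zero =>
          have h2 : Pos (a ^ (n + 2 - 1 - 0)) := by
            have : n + 2 - 1 - 0 = n + 1 := by omega
            rw [this]
            exact ha.pow_succ n
          have := h2.mul_nneg (hb.nneg.pow 0)
          rw [mul_comm] at this
          exact this g hg
        | succ i =>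
          exact ((hb.pow_succ i).mul_nneg (ha.nneg.pow _)) g hg
      have hzero : (b ^ (n + 2) - a ^ (n + 2)).coeff γ = 0 := by
        rw [← hgeom]
        by_contra hc
        obtain ⟨u, hu, v, hv, huv⟩ := Set.mem_add.mp
          (HahnSeries.support_mul_subset (x := hsum) (y := b - a) hc)
        have hu' : 0 < u := lt_of_not_ge fun hle => hu (hpos u hle)
        have hv' : γ ≤ v := by
          rw [HahnSeries.mem_support] at hv
          have hvne : (a - b).coeff v ≠ 0 := by
            intro hz
            apply hv
            rw [HahnSeries.coeff_sub] at hz ⊢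
            linarith
          exact HahnSeries.order_le_of_coeff_ne_zero hvne
        have : γ < u + v := by
          calc γ ≤ v := hv'
          _ < u + v := by rwa [lt_add_iff_pos_left]
        rw [← huv] at this
        exact absurd rfl (ne_of_gt this)
      have : (b ^ (n + 2)).coeff γ - (a ^ (n + 2)).coeff γ = 0 := by
        rw [← HahnSeries.coeff_sub]
        exact hzero
      rw [this, mul_zero]
  have hγcoeff : (a - b).coeff γ = 0 := by
    have hfa : (Function.support fun n : ℕ =>
        PowerSeries.coeff n tail * (a ^ n).coeff γ).Finite :=
      (co_pow_finite ha γ).subset fun n hn => by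
        simp only [Function.mem_support] at hn
        exact fun hz => hn (by rw [hz, mul_zero])
    have hfb : (Function.support fun n : ℕ =>
        PowerSeries.coeff n tail * (b ^ n).coeff γ).Finite :=
      (co_pow_finite hb γ).subset fun n hn => by
        simp only [Function.mem_support] at hn
        exact fun hz => hn (by rw [hz, mul_zero])
    rw [hkey, HahnSeries.coeff_sub, Phi_coeff, Phi_coeff, ← finsum_sub_distrib hfb hfa]
    refine finsum_eq_zero_of_forall_eq_zero fun n => ?_
    rw [← mul_sub]
    exact hterm n
  exact (mt HahnSeries.coeff_order_eq_zero.mp hd0) hγcoeff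


lemma Phi_congr {f : PowerSeries k} {x y : HahnSeries G k} (hxy : x = y)
    (hx : Pos x) (hy : Pos y) : Phi f x hx = Phi f y hy := by
  subst hxy; rfl

lemma Phi_expS_add (x y : HahnSeries G k) (hx : Pos x) (hy : Pos y) :
    Phi (expS k) (x + y) (hx.add hy) = Phi (expS k) x hx * Phi (expS k) y hy := by
  have h1 : groupFam (SummableFamily.mul (psFam (expS k) x hx) (psFam (expS k) y hy))
      = psFam (expS k) (x + y) (hx.add hy) := by
    refine SummableFamily.ext fun n => ?_
    simp only [groupFam_apply, psFam_apply, SummableFamily.mul_toFun,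
      HahnSeries.of_symm_smul_of_eq_mul, coeff_expS]
    rw [add_pow, Finset.Nat.sum_antidiagonal_eq_sum_range_succ_mk, Finset.smul_sum]
    refine Finset.sum_congr rfl fun i hi => ?_
    have hin : i ≤ n := Nat.lt_succ_iff.mp (Finset.mem_range.mp hi)
    have hne1 : ((i.factorial : k)) ≠ 0 := Nat.cast_ne_zero.mpr i.factorial_ne_zero
    have hne2 : (((n - i).factorial : k)) ≠ 0 := Nat.cast_ne_zero.mpr (n - i).factorial_ne_zero
    have hne3 : ((n.factorial : k)) ≠ 0 := Nat.cast_ne_zero.mpr n.factorial_ne_zero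
    have hfact : (i.factorial : k)⁻¹ * ((n - i).factorial : k)⁻¹
        = (n.factorial : k)⁻¹ * (n.choose i : k) := by
      have h := Nat.choose_mul_factorial_mul_factorial hin
      have hcast : ((n.choose i : k)) * (i.factorial : k) * ((n - i).factorial : k)
          = (n.factorial : k) := by exact_mod_cast congrArg (Nat.cast : ℕ → k) h
      field_simp
      rw [← hcast]
      ring
    have hcastH : ((n.choose i : ℕ) : HahnSeries G k)
        = HahnSeries.single (0 : G) ((n.choose i : ℕ) : k) := by
      rw [← HahnSeries.C_apply, map_natCast]
    rw [← HahnSeries.single_zero_mul_eq_smul, ← HahnSeries.single_zero_mul_eq_smul,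
      ← HahnSeries.single_zero_mul_eq_smul, hcastH]
    have hs : HahnSeries.single (0 : G) ((i.factorial : k)⁻¹)
          * HahnSeries.single (0 : G) (((n - i).factorial : k)⁻¹)
        = HahnSeries.single (0 : G) ((n.factorial : k)⁻¹)
          * HahnSeries.single (0 : G) ((n.choose i : ℕ) : k) := by
      rw [HahnSeries.single_mul_single, HahnSeries.single_mul_single, zero_add]
      exact congrArg _ hfact
    calc HahnSeries.single (0 : G) ((i.factorial : k)⁻¹) * x ^ i
          * (HahnSeries.single (0 : G) (((n - i).factorial : k)⁻¹) * y ^ (n - i))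
        = HahnSeries.single (0 : G) ((i.factorial : k)⁻¹)
            * HahnSeries.single (0 : G) (((n - i).factorial : k)⁻¹)
            * (x ^ i * y ^ (n - i)) := by ring
      _ = HahnSeries.single (0 : G) ((n.factorial : k)⁻¹)
            * HahnSeries.single (0 : G) ((n.choose i : ℕ) : k) * (x ^ i * y ^ (n - i)) := by
          rw [hs]
      _ = HahnSeries.single (0 : G) ((n.factorial : k)⁻¹)
            * (x ^ i * y ^ (n - i) * HahnSeries.single (0 : G) ((n.choose i : ℕ) : k)) := by
          ring
  calc Phi (expS k) (x + y) (hx.add hy)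
      = (groupFam (SummableFamily.mul (psFam (expS k) x hx)
          (psFam (expS k) y hy))).hsum := by rw [h1]; rfl
    _ = (SummableFamily.mul (psFam (expS k) x hx) (psFam (expS k) y hy)).hsum :=
        hsum_groupFam _
    _ = Phi (expS k) x hx * Phi (expS k) y hy := by
        rw [SummableFamily.hsum_mul]; rfl

open scoped Classical in
noncomputable def EF (x : HahnSeries G k) : HahnSeries G k :=
  if h : Pos x then Phi (expS k) x h else 0

open scoped Classical in
noncomputable def LF (x : HahnSeries G k) : HahnSeries G k :=
  if h : Pos (x - 1) then Phi (logS k) (x - 1) h else 0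

lemma EF_pos {x : HahnSeries G k} (h : Pos x) : EF x = Phi (expS k) x h := dif_pos h

lemma LF_pos {x : HahnSeries G k} (h : Pos (x - 1)) : LF x = Phi (logS k) (x - 1) h :=
  dif_pos h

lemma LF_one_add {ε : HahnSeries G k} (h : Pos ε) : LF (1 + ε) = Phi (logS k) ε h := by
  have h2 : (1 + ε) - 1 = ε := by ring
  have h' : Pos ((1 + ε) - 1) := by rwa [h2]
  rw [LF_pos h']
  exact Phi_congr h2 h' h

lemma EF_sub_one {x : HahnSeries G k} (h : Pos x) :
    EF x - 1 = Phi (expS k - 1) x h ∧ Pos (EF x - 1) := by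
  have h1 : EF x - 1 = Phi (expS k - 1) x h := by
    rw [EF_pos h, Phi_sub, Phi_one]
  exact ⟨h1, by rw [h1]; exact pos_Phi constantCoeff_gexp h⟩

lemma LE_core (ε : HahnSeries G k) (hε : Pos ε) :
    Phi (logS k) (Phi (expS k - 1) ε hε) (pos_Phi constantCoeff_gexp hε) = ε := by
  rw [← Phi_comp (logS k) (expS k - 1) constantCoeff_gexp hε, comp_logS_gexp, Phi_X]

lemma LE (ε : HahnSeries G k) (hε : Pos ε) : LF (EF ε) = ε := by
  obtain ⟨h1, h2⟩ := EF_sub_one hε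
  rw [LF_pos h2]
  rw [Phi_congr h1 h2 (pos_Phi constantCoeff_gexp hε)]
  exact LE_core ε hε

lemma EL (ε : HahnSeries G k) (hε : Pos ε) : EF (LF (1 + ε)) = 1 + ε := by
  set ε' : HahnSeries G k := Phi (logS k) ε hε with hε'def
  have hε' : Pos ε' := pos_Phi constantCoeff_logS hε
  rw [LF_one_add hε]
  obtain ⟨h1, h2⟩ := EF_sub_one hε'
  have h3 : Phi (logS k) (EF ε' - 1) h2 = ε' := by
    rw [Phi_congr h1 h2 (pos_Phi constantCoeff_gexp hε')]
    exact LE_core ε' hε'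
  have h4 : EF ε' - 1 = ε := by
    refine Phi_logS_inj h2 hε ?_
    rw [h3, hε'def]
  have : EF ε' = 1 + ε := by rw [← h4]; ring
  exact this

lemma mem_mu_iff (f : HahnSeries G k) :
    f ∈ {f : HahnSeries G k | f = 0 ∨ 0 < f.order} ↔ Pos f := by
  rw [Set.mem_setOf_eq, pos_iff]
  constructor
  · rintro (rfl | h)
    · rw [HahnSeries.orderTop_zero]
      exact lt_of_le_of_ne le_top (by simp)
    · exact HahnSeries.zero_lt_orderTop_of_order h
  · intro h
    rcases eq_or_ne f 0 with rfl | hf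
    · exact Or.inl rfl
    · exact Or.inr ((HahnSeries.zero_lt_orderTop_iff hf).mp h)


end Stmt7Aux




/-- In the Hahn series field k((G)) over an ordered field k (so char k = 0), with
μ the set of series of strictly positive valuation (the infinitesimals), the map
E₀ : μ → 1 + μ, E₀(ε) = Σ_{n≥0} εⁿ/n!, is a bijection from μ onto 1 + μ satisfying
E₀(x+y) = E₀(x)·E₀(y), with inverse l(1+ε) = Σ_{n≥1} (-1)^{n+1} εⁿ/n. -/
theorem stmt7 {k G : Type*} [Field k] [LinearOrder k] [IsStrictOrderedRing k]
    [AddCommGroup G] [LinearOrder G] [IsOrderedAddMonoid G] :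
    ∃ E L : HahnSeries G k → HahnSeries G k,
      (∀ ε ∈ {f : HahnSeries G k | f = 0 ∨ 0 < f.order},
        ∃ S : HahnSeries.SummableFamily G k ℕ,
          (∀ n : ℕ, S n = ((n.factorial : k)⁻¹) • ε ^ n) ∧ E ε = S.hsum) ∧
      (∀ ε ∈ {f : HahnSeries G k | f = 0 ∨ 0 < f.order},
        ∃ S : HahnSeries.SummableFamily G k ℕ,
          (∀ m : ℕ, S m = (((-1 : k) ^ m / ((m : k) + 1)) • ε ^ (m + 1))) ∧
            L (1 + ε) = S.hsum) ∧
      (∀ x ∈ {f : HahnSeries G k | f = 0 ∨ 0 < f.order},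
        ∀ y ∈ {f : HahnSeries G k | f = 0 ∨ 0 < f.order}, E (x + y) = E x * E y) ∧
      Set.BijOn E {f : HahnSeries G k | f = 0 ∨ 0 < f.order}
        ((fun f => 1 + f) '' {f : HahnSeries G k | f = 0 ∨ 0 < f.order}) ∧
      (∀ ε ∈ {f : HahnSeries G k | f = 0 ∨ 0 < f.order},
        L (E ε) = ε ∧ E (L (1 + ε)) = 1 + ε) := by
  classical
  refine ⟨Stmt7Aux.EF, Stmt7Aux.LF, ?_, ?_, ?_, ⟨?_, ?_, ?_⟩, ?_⟩
  · intro ε hε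
    have h := (Stmt7Aux.mem_mu_iff ε).mp hε
    exact ⟨Stmt7Aux.psFam (Stmt7Aux.expS k) ε h,
      fun n => by simp [Stmt7Aux.psFam_apply, Stmt7Aux.coeff_expS], Stmt7Aux.EF_pos h⟩
  · intro ε hε
    have h := (Stmt7Aux.mem_mu_iff ε).mp hε
    refine ⟨Stmt7Aux.psFamS (Stmt7Aux.logS k) ε h, fun m => ?_, ?_⟩
    · rw [Stmt7Aux.psFamS_apply, Stmt7Aux.coeff_logS]
      congr 1
      push_cast
      rw [pow_succ, pow_succ]
      ring
    · rw [Stmt7Aux.LF_one_add h]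
      exact (Stmt7Aux.hsum_psFamS _ Stmt7Aux.constantCoeff_logS h).symm
  · intro x hx y hy
    have hx' := (Stmt7Aux.mem_mu_iff x).mp hx
    have hy' := (Stmt7Aux.mem_mu_iff y).mp hy
    rw [Stmt7Aux.EF_pos (hx'.add hy'), Stmt7Aux.EF_pos hx', Stmt7Aux.EF_pos hy']
    exact Stmt7Aux.Phi_expS_add x y hx' hy'
  · -- MapsTo
    intro ε hε
    have h := (Stmt7Aux.mem_mu_iff ε).mp hε
    refine ⟨Stmt7Aux.EF ε - 1, (Stmt7Aux.mem_mu_iff _).mpr (Stmt7Aux.EF_sub_one h).2, ?_⟩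
    ring
  · -- InjOn
    intro a ha b hb heq
    have ha' := (Stmt7Aux.mem_mu_iff a).mp ha
    have hb' := (Stmt7Aux.mem_mu_iff b).mp hb
    rw [← Stmt7Aux.LE a ha', heq, Stmt7Aux.LE b hb']
  · -- SurjOn
    rintro z ⟨ε, hε, rfl⟩
    have h := (Stmt7Aux.mem_mu_iff ε).mp hε
    refine ⟨Stmt7Aux.LF (1 + ε), (Stmt7Aux.mem_mu_iff _).mpr ?_, Stmt7Aux.EL ε h⟩
    rw [Stmt7Aux.LF_one_add h]
    exact Stmt7Aux.pos_Phi Stmt7Aux.constantCoeff_logS h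
  · intro ε hε
    have h := (Stmt7Aux.mem_mu_iff ε).mp hε
    exact ⟨Stmt7Aux.LE ε h, Stmt7Aux.EL ε h⟩
end

section
/- Let M ⊆ N be models of PA with M an initial segment of N (elementary end extension), and let v denote the standard valuation on the real closures R(M) ⊆ R(N). Then the value group v(R(M)^×) is a convex subgroup of v(R(N)^×). -/
open FirstOrder Language

/-- A real closed ordered field: every nonnegative element is a square and every
polynomial of odd degree has a root. -/
def IsRealClosedOrd (K : Type*) [Field K] [LinearOrder K] [IsStrictOrderedRing K] : Prop :=
  (∀ x : K, 0 ≤ x → ∃ y : K, y ^ 2 = x) ∧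
    ∀ p : Polynomial K, Odd p.natDegree → ∃ x : K, p.eval x = 0

/-- The first-order language of ordered rings. -/
abbrev ordRingLang : FirstOrder.Language := Language.ring.sum Language.order

noncomputable instance ordRingStruct1 (M : Type*) [CommRing M] [LinearOrder M] [IsStrictOrderedRing M] :
    Language.ring.Structure M := (FirstOrder.Ring.compatibleRingOfRing M).toStructure

noncomputable instance ordRingStruct2 (M : Type*) [LE M] : Language.order.Structure M :=
  orderStructure M

/-- `M` is (the ring of differences of) a model of PA: a discretely linearly ordered
commutative ring satisfying the first-order induction scheme on its nonnegative part for
all formulas in the language of ordered rings (with parameters). -/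
def ModelOfPA (M : Type*) [CommRing M] [LinearOrder M] [IsStrictOrderedRing M] : Prop :=
  (∀ x : M, ¬(0 < x ∧ x < 1)) ∧
  ∀ (n : ℕ) (φ : ordRingLang.Formula (Fin (n + 1))) (p : Fin n → M),
    φ.Realize (Fin.cons 0 p) →
    (∀ x : M, 0 ≤ x → φ.Realize (Fin.cons x p) → φ.Realize (Fin.cons (x + 1) p)) →
    ∀ x : M, 0 ≤ x → φ.Realize (Fin.cons x p)

/-- A subset of `M` definable (with parameters) in the language of ordered rings. -/
def DefinableSet {M : Type*} [CommRing M] [LinearOrder M] [IsStrictOrderedRing M] (A : Set M) : Prop :=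
  ∃ (n : ℕ) (φ : ordRingLang.Formula (Fin (n + 1))) (p : Fin n → M),
    ∀ x : M, x ∈ A ↔ φ.Realize (Fin.cons x p)

/-- `N` is an elementary end extension of `M` (as subrings of an ambient ordered field):
`M` is an initial segment of `N` and the inclusion preserves all first-order formulas of
the language of ordered rings. -/
def ElemEndExt {K : Type*} [Field K] [LinearOrder K] [IsStrictOrderedRing K] (M N : Subring K) (h : M ≤ N) : Prop :=
  (∀ x ∈ N, ∀ m ∈ M, 0 ≤ x → x ≤ m → x ∈ M) ∧
  ∀ (n : ℕ) (φ : ordRingLang.Formula (Fin n)) (p : Fin n → M),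
    φ.Realize p ↔ φ.Realize (fun i => Subring.inclusion h (p i))

section Aux

open Polynomial

variable {K : Type*} [Field K] [LinearOrder K] [IsStrictOrderedRing K] {M : Subring K}

lemma aux_abs_mem {m : K} (hm : m ∈ M) : |m| ∈ M := by
  rcases abs_choice m with h | h <;> rw [h]
  · exact hm
  · exact neg_mem hm

lemma aux_one_le_abs (hd : ∀ m ∈ M, ¬(0 < m ∧ m < 1)) {m : K} (hm : m ∈ M) (h0 : m ≠ 0) :
    1 ≤ |m| := by
  by_contra h
  push_neg at h
  exact hd |m| (aux_abs_mem hm) ⟨abs_pos.2 h0, h⟩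

lemma aux_algebraic_iff {x : K} : AlgebraicOver M x ↔ IsAlgebraic ↥M x := by
  constructor
  · rintro ⟨p, hp0, hpc, hpe⟩
    have hcs : (↑p.coeffs : Set K) ⊆ ↑M := by
      intro c hc
      rw [Finset.mem_coe, mem_coeffs_iff] at hc
      obtain ⟨n, -, rfl⟩ := hc
      exact hpc n
    refine ⟨p.toSubring M hcs, ?_, ?_⟩
    · intro h
      apply hp0
      rw [← p.map_toSubring M hcs, h, Polynomial.map_zero]
    · have : (algebraMap ↥M K : ↥M →+* K) = M.subtype := rfl
      rw [aeval_def, ← eval_map, this, p.map_toSubring M hcs, hpe]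
  · rintro ⟨q, hq0, hqe⟩
    refine ⟨q.map (algebraMap ↥M K), ?_, ?_, ?_⟩
    · intro h
      exact hq0 (Polynomial.map_injective _ Subtype.coe_injective (by simpa using h))
    · intro i
      rw [coeff_map]
      exact (q.coeff i).2
    · rw [eval_map, ← aeval_def, hqe]

lemma aux_mem_algebraic {w : K} (hw : w ∈ M) : AlgebraicOver M w := by
  refine ⟨X - C w, X_sub_C_ne_zero w, ?_, by simp⟩
  intro i
  rcases i with _ | _ | i
  · simpa using neg_mem hw
  · simpa using one_mem M
  · simpa [coeff_X] using zero_mem M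

lemma aux_div_const {m w : K} (hm : m ∈ M) (hm0 : m ≠ 0)
    (h : AlgebraicOver M (m * w)) : AlgebraicOver M w := by
  obtain ⟨q, hq0, hqc, hqe⟩ := h
  refine ⟨∑ i ∈ q.support, monomial i (q.coeff i * m ^ i), ?_, ?_, ?_⟩
  · intro h
    have hc := congrArg (fun r => Polynomial.coeff r q.natDegree) h
    simp only [finset_sum_coeff, coeff_monomial, Finset.sum_ite_eq',
      q.natDegree_mem_support_of_nonzero hq0, if_pos, coeff_zero] at hc
    exact mul_ne_zero (leadingCoeff_ne_zero.2 hq0) (pow_ne_zero _ hm0) hc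
  · intro i
    rw [finset_sum_coeff]
    simp only [coeff_monomial, Finset.sum_ite_eq']
    split
    · exact mul_mem (hqc i) (pow_mem hm i)
    · exact zero_mem M
  · rw [eval_finset_sum]
    simp only [eval_monomial]
    rw [eval_eq_sum, sum_def] at hqe
    rw [← hqe]
    exact Finset.sum_congr rfl fun i _ => by rw [mul_pow]; ring

set_option synthInstance.maxHeartbeats 1000000 in
lemma aux_mul {x y : K} (hx : AlgebraicOver M x) (hy : AlgebraicOver M y) :
    AlgebraicOver M (x * y) := by
  have hinj : ∀ r : ↥M, algebraMap ↥M K r = 0 → r = 0 := fun r hr => Subtype.ext hr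
  obtain ⟨c, hc0, hca⟩ := (aux_algebraic_iff.1 hx).exists_integral_multiple
  obtain ⟨c', hc'0, hca'⟩ := (aux_algebraic_iff.1 hy).exists_integral_multiple
  have h1 : IsIntegral ↥M ((c : K) * x) := by
    rwa [Algebra.smul_def] at hca
  have h2 : IsIntegral ↥M ((c' : K) * y) := by
    rwa [Algebra.smul_def] at hca'
  have h3 : IsAlgebraic ↥M (((c : K) * (c' : K)) * (x * y)) := by
    have := (h1.mul h2).isAlgebraic
    rwa [show ((c : K) * x) * ((c' : K) * y) = ((c : K) * (c' : K)) * (x * y) by ring] at this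
  refine aux_div_const (mul_mem c.2 c'.2) ?_ (aux_algebraic_iff.2 h3)
  exact mul_ne_zero (fun h => hc0 (Subtype.ext (by simpa using h)))
    (fun h => hc'0 (Subtype.ext (by simpa using h)))

lemma aux_inv {x : K} (hx : AlgebraicOver M x) (h0 : x ≠ 0) : AlgebraicOver M x⁻¹ := by
  obtain ⟨p, hp0, hpc, hpe⟩ := hx
  letI := invertibleOfNonzero h0
  refine ⟨p.reverse, by simpa [reverse_eq_zero] using hp0, ?_, ?_⟩
  · intro i
    rw [coeff_reverse]
    exact hpc _
  · have h := (eval₂_reverse_eq_zero_iff (RingHom.id K) x p).2 hpe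
    rw [← invOf_eq_inv]
    exact h

lemma aux_bound (hd : ∀ m ∈ M, ¬(0 < m ∧ m < 1)) {x : K} (h : AlgebraicOver M x) :
    ∃ a ∈ M, 1 ≤ a ∧ |x| ≤ a := by
  obtain ⟨p, hp0, hpc, hpe⟩ := h
  have hd1 : 1 ≤ p.natDegree := by
    rcases Nat.eq_zero_or_pos p.natDegree with h | h
    · exfalso
      apply hp0
      have := eq_C_of_natDegree_eq_zero h
      rw [this, eval_C] at hpe
      rw [this, hpe, map_zero]
    · exact h
  set d := p.natDegree with hdd
  set S := ∑ i ∈ Finset.range d, |p.coeff i| with hS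
  have hS0 : 0 ≤ S := Finset.sum_nonneg fun i _ => abs_nonneg _
  refine ⟨1 + S, add_mem (one_mem M) (sum_mem fun i _ => aux_abs_mem (hpc i)), by linarith, ?_⟩
  by_contra hcon
  push_neg at hcon
  have hx1 : 1 ≤ |x| := by linarith
  have hxpos : 0 < |x| ^ (d - 1) := pow_pos (by linarith) _
  have heval : (0 : K) = (∑ i ∈ Finset.range d, p.coeff i * x ^ i) + p.coeff d * x ^ d := by
    rw [← hpe, eval_eq_sum_range, Finset.sum_range_succ]
  have hlead : 1 ≤ |p.coeff d| := aux_one_le_abs hd (hpc d) (by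
    rw [hdd]; exact leadingCoeff_ne_zero.2 hp0)
  have h1 : |p.coeff d * x ^ d| ≤ S * |x| ^ (d - 1) := by
    have : p.coeff d * x ^ d = -(∑ i ∈ Finset.range d, p.coeff i * x ^ i) := by linarith
    rw [this, abs_neg]
    calc |∑ i ∈ Finset.range d, p.coeff i * x ^ i|
        ≤ ∑ i ∈ Finset.range d, |p.coeff i * x ^ i| := Finset.abs_sum_le_sum_abs _ _
      _ ≤ ∑ i ∈ Finset.range d, |p.coeff i| * |x| ^ (d - 1) := by
          refine Finset.sum_le_sum fun i hi => ?_
          rw [abs_mul, abs_pow]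
          exact mul_le_mul_of_nonneg_left
            (pow_le_pow_right₀ hx1 (Nat.le_sub_one_of_lt (Finset.mem_range.1 hi)))
            (abs_nonneg _)
      _ = S * |x| ^ (d - 1) := by rw [hS, Finset.sum_mul]
  have h2 : |x| ^ d ≤ |p.coeff d * x ^ d| := by
    rw [abs_mul, abs_pow]
    nlinarith [pow_pos (show (0:K) < |x| by linarith) d]
  have h3 : |x| ^ (d - 1) * |x| = |x| ^ d := by
    rw [← pow_succ, Nat.sub_add_cancel hd1]
  nlinarith

end Aux

section Aux2

open Polynomial

variable {K : Type*} [Field K] [LinearOrder K] [IsStrictOrderedRing K] {M : Subring K}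

lemma aux_key {N : Subring K} (hNd : ∀ m ∈ N, ¬(0 < m ∧ m < 1))
    (hint : ∀ x : K, ∃ m ∈ N, m ≤ x ∧ x < m + 1)
    (hseg : ∀ x ∈ N, ∀ m ∈ M, 0 ≤ x → x ≤ m → x ∈ M)
    {z c : K} (hz1 : 1 ≤ |z|) (hc : c ∈ M) (hzc : |z| ≤ c) :
    ∃ w : K, AlgebraicOver M w ∧ w ≠ 0 ∧ FiniteElt (z / w) ∧ FiniteElt (w / z) := by
  obtain ⟨w, hwN, hw1, hw2⟩ := hint |z|
  have hw0 : 0 < w := by linarith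
  have hwge1 : 1 ≤ w := by
    by_contra h
    push_neg at h
    exact hNd w hwN ⟨hw0, h⟩
  have hwM : w ∈ M := hseg w hwN c hc hw0.le (hw1.trans hzc)
  have hzpos : 0 < |z| := by linarith
  refine ⟨w, aux_mem_algebraic hwM, ne_of_gt hw0, ⟨2, ?_⟩, ⟨1, ?_⟩⟩
  · rw [abs_div, abs_of_pos hw0, div_le_iff₀ hw0]
    push_cast
    linarith
  · rw [abs_div, abs_of_pos hw0]
    push_cast
    rw [div_le_one hzpos]
    exact hw1

end Aux2

/-- If M ⊆ N are models of PA with N an elementary end extension of M, and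
K = R(N) is the real closure of N (with R(M) = the set of elements of K algebraic
over M), then the value group v(R(M)ˣ) is a convex subgroup of v(R(N)ˣ) under the
standard valuation: it is closed under products and inverses, and any value of a
nonzero element of K lying between two values of nonzero elements of R(M) is itself
the value of a nonzero element of R(M). -/
theorem stmt10 {K : Type*} [Field K] [LinearOrder K] [IsStrictOrderedRing K] (hK : IsRealClosedOrd K)
    (N : Subring K) (hNPA : ModelOfPA N) (hNint : IsIntegerPart N)
    (halg : ∀ x : K, AlgebraicOver N x)
    (M : Subring K) (hMN : M ≤ N) (hMPA : ModelOfPA M)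
    (hee : ElemEndExt M N hMN) :
    (∀ x y : K, AlgebraicOver M x → AlgebraicOver M y →
      AlgebraicOver M (x * y) ∧ (x ≠ 0 → AlgebraicOver M x⁻¹)) ∧
    ∀ x y z : K, AlgebraicOver M x → AlgebraicOver M y →
      x ≠ 0 → y ≠ 0 → z ≠ 0 → vle x z → vle z y →
      ∃ w : K, AlgebraicOver M w ∧ w ≠ 0 ∧ veq w z := by
  have hMd : ∀ m ∈ M, ¬(0 < m ∧ m < 1) := by
    intro m hm h
    exact hMPA.1 ⟨m, hm⟩ ⟨by exact_mod_cast h.1, by exact_mod_cast h.2⟩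
  have hNd : ∀ m ∈ N, ¬(0 < m ∧ m < 1) := by
    intro m hm h
    exact hNPA.1 ⟨m, hm⟩ ⟨by exact_mod_cast h.1, by exact_mod_cast h.2⟩
  constructor
  · exact fun x y hx hy => ⟨aux_mul hx hy, fun h0 => aux_inv hx h0⟩
  intro x y z hax hay hx0 hy0 hz0 hxz hzy
  obtain ⟨k, hk⟩ := hxz
  obtain ⟨k', hk'⟩ := hzy
  obtain ⟨a, haM, ha1, hxa⟩ := aux_bound hMd hax
  obtain ⟨b, hbM, hb1, hyb⟩ := aux_bound hMd (aux_inv hay hy0)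
  have hxpos : 0 < |x| := abs_pos.2 hx0
  have hk0 : (0 : K) ≤ (k : K) := Nat.cast_nonneg k
  have hk'0 : (0 : K) ≤ (k' : K) := Nat.cast_nonneg k'
  have hzc : |z| ≤ ((k : K) + 1) * a := by
    rw [abs_div, div_le_iff₀ hxpos] at hk
    nlinarith [mul_le_mul_of_nonneg_left hxa hk0]
  have hcM : ((k : K) + 1) * a ∈ M := mul_mem (add_mem (natCast_mem M k) (one_mem M)) haM
  have hzinv : |z⁻¹| ≤ ((k' : K) + 1) * b := by
    have h1 : z⁻¹ = (y / z) * y⁻¹ := by field_simp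
    rw [h1, abs_mul]
    nlinarith [mul_le_mul hk' hyb (abs_nonneg y⁻¹) hk'0]
  have hc'M : ((k' : K) + 1) * b ∈ M := mul_mem (add_mem (natCast_mem M k') (one_mem M)) hbM
  rcases le_or_gt 1 |z| with h1 | h1
  · obtain ⟨w, hw, hw0, hA, hB⟩ := aux_key hNd hNint.2 hee.1 h1 hcM hzc
    exact ⟨w, hw, hw0, hA, hB⟩
  · have hz1 : 1 ≤ |z⁻¹| := by
      rw [abs_inv]
      exact one_le_inv_iff₀.2 ⟨abs_pos.2 hz0, h1.le⟩
    obtain ⟨w, hw, hw0, hA, hB⟩ := aux_key hNd hNint.2 hee.1 hz1 hc'M hzinv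
    refine ⟨w⁻¹, aux_inv hw hw0, inv_ne_zero hw0, ?_, ?_⟩
    · have h2 : z / w⁻¹ = w / z⁻¹ := by rw [div_inv_eq_mul, div_inv_eq_mul, mul_comm]
      show FiniteElt (z / w⁻¹)
      rwa [h2]
    · have h2 : w⁻¹ / z = z⁻¹ / w := by
        rw [div_eq_div_iff hz0 hw0, inv_mul_cancel₀ hw0, inv_mul_cancel₀ hz0]
      show FiniteElt (w⁻¹ / z)
      rwa [h2]
end
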